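/- arXiv:1712.01270 — 3 statements merged into one kernel-verified Lean document; each statement's English description precedes it below -/
import Mathlib

section
/- Let b, x be real with b ≠ 0, and let S = diag(1, √|b|). Then S·J(x,y)·S⁻¹ = [[−2x, b/√|b|],[√|b|, 0]], where J(x,y) = [[−2x, b],[1, 0]], and the singular values of S·J(x,y)·S⁻¹ are σ₁((x,y),S) = √(x² + |b|) + |x| and σ₂((x,y),S) = √(x² + |b|) − |x| = |b|/σ₁((x,y),S). -/
open Matrix

/-- `μ` is an eigenvalue of the real 2×2 matrix `A`. -/
def IsEigenvalue2 (A : Matrix (Fin 2) (Fin 2) ℝ) (μ : ℝ) : Prop :=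
  ∃ v : Fin 2 → ℝ, v ≠ 0 ∧ Matrix.mulVec A v = μ • v

lemma eig_iff_det (A : Matrix (Fin 2) (Fin 2) ℝ) (μ : ℝ) :
    IsEigenvalue2 A μ ↔ (A - μ • (1 : Matrix (Fin 2) (Fin 2) ℝ)).det = 0 := by
  rw [← Matrix.exists_mulVec_eq_zero_iff]
  unfold IsEigenvalue2
  constructor
  · rintro ⟨v, hv, h⟩
    exact ⟨v, hv, by simp [Matrix.sub_mulVec, Matrix.smul_mulVec, h]⟩
  · rintro ⟨v, hv, h⟩
    refine ⟨v, hv, ?_⟩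
    have := h
    simp [Matrix.sub_mulVec, Matrix.smul_mulVec, sub_eq_zero] at this
    exact sub_eq_zero.mp (by rw [← h, Matrix.sub_mulVec, Matrix.smul_mulVec, Matrix.one_mulVec])

theorem henon_jacobian_conjugated_singular_values (b x : ℝ) (hb : b ≠ 0)
    (S J M : Matrix (Fin 2) (Fin 2) ℝ)
    (hS : S = !![1, 0; 0, Real.sqrt |b|])
    (hJ : J = !![-2 * x, b; 1, 0])
    (hM : M = S * J * S⁻¹)
    (σ₁ σ₂ : ℝ)
    (hσ₁ : σ₁ = Real.sqrt (x ^ 2 + |b|) + |x|)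
    (hσ₂ : σ₂ = Real.sqrt (x ^ 2 + |b|) - |x|) :
    M = !![-2 * x, b / Real.sqrt |b|; Real.sqrt |b|, 0] ∧
    σ₂ = |b| / σ₁ ∧ σ₁ ≥ σ₂ ∧ σ₂ > 0 ∧
    (∀ μ : ℝ, IsEigenvalue2 (Mᵀ * M) μ ↔ μ = σ₁ ^ 2 ∨ μ = σ₂ ^ 2) := by
  set s := Real.sqrt |b| with hs
  have hb0 : (0:ℝ) < |b| := abs_pos.mpr hb
  have hs0 : 0 < s := Real.sqrt_pos.mpr hb0
  have hs0' : s ≠ 0 := ne_of_gt hs0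
  have hss : s * s = |b| := Real.mul_self_sqrt (le_of_lt hb0)
  -- inverse
  have hSinv : S⁻¹ = !![1, 0; 0, s⁻¹] := by
    apply inv_eq_right_inv
    rw [hS]
    ext i j
    fin_cases i <;> fin_cases j <;>
      simp [Matrix.mul_apply, Fin.sum_univ_two, hs0']
  have hMform : M = !![-2 * x, b / s; s, 0] := by
    rw [hM, hSinv, hS, hJ]
    ext i j
    fin_cases i <;> fin_cases j <;>
      simp [Matrix.mul_apply, Fin.sum_univ_two, div_eq_mul_inv]
  -- sqrt facts
  have hq : Real.sqrt (x ^ 2 + |b|) ^ 2 = x ^ 2 + |b| :=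
    Real.sq_sqrt (by positivity)
  have hxlt : |x| < Real.sqrt (x ^ 2 + |b|) := by
    have : Real.sqrt (x ^ 2) < Real.sqrt (x ^ 2 + |b|) :=
      Real.sqrt_lt_sqrt (by positivity) (by linarith)
    simpa [Real.sqrt_sq_eq_abs] using this
  have hσ₂pos : σ₂ > 0 := by rw [hσ₂]; linarith
  have hσ₁pos : σ₁ > 0 := by rw [hσ₁]; positivity
  have hprod : σ₁ * σ₂ = |b| := by
    rw [hσ₁, hσ₂]
    have hx2 : |x| ^ 2 = x ^ 2 := sq_abs x
    nlinarith [hq, hx2]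
  refine ⟨hMform, ?_, ?_, hσ₂pos, ?_⟩
  · field_simp
    linarith [hprod]
  · rw [hσ₁, hσ₂]; linarith [abs_nonneg x]
  · intro μ
    rw [eig_iff_det]
    have hdet : (Mᵀ * M - μ • (1 : Matrix (Fin 2) (Fin 2) ℝ)).det
        = (μ - σ₁ ^ 2) * (μ - σ₂ ^ 2) := by
      rw [hMform]
      have hT : (!![-2 * x, b / s; s, 0])ᵀ = !![-2 * x, s; b / s, 0] := by
        ext i j; fin_cases i <;> fin_cases j <;> simp
      rw [hT]
      have hc2 : (b / s) * (b / s) = |b| := by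
        rw [div_mul_div_comm, hss]
        rw [div_eq_iff (ne_of_gt hb0)]
        nlinarith [abs_mul_abs_self b]
      have hsum : σ₁ ^ 2 + σ₂ ^ 2 = 4 * x ^ 2 + 2 * |b| := by
        have hx2 : |x| ^ 2 = x ^ 2 := sq_abs x
        rw [hσ₁, hσ₂]; nlinarith [hq, hx2]
      have hpr2 : σ₁ ^ 2 * σ₂ ^ 2 = |b| ^ 2 := by
        nlinarith [hprod]
      simp [Matrix.det_fin_two, Matrix.mul_apply, Fin.sum_univ_two,
        Matrix.one_apply]
      linear_combination (s * s - μ) * hc2 + (|b| - μ) * hss + μ * hsum - hpr2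
    rw [hdet, mul_eq_zero, sub_eq_zero, sub_eq_zero]
end

section
/- Let a, b be real with 0 < |b| < 1 and a > −(b−1)²/4. Set x₋ = ((b−1) − √((b−1)² + 4a))/2 and γ = 1/((b − 1 − 2x₋)·√(x₋² + |b|)). Then for every real x: ln(√(x² + |b|) + |x|) + γ·(a + (b−1)x − x²) ≤ ln(√(x₋² + |b|) + |x₋|). -/
set_option maxHeartbeats 1000000 in
/-- Key algebraic inequality. -/
lemma henon_key_ineq (β t tm s sm r x : ℝ) (hβ : 0 < β) (ht : 0 ≤ t) (htm : 0 < tm)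
    (hs2 : s ^ 2 = t ^ 2 + β) (hsm2 : sm ^ 2 = tm ^ 2 + β) (hst : t ≤ s) (hsmtm : tm ≤ sm)
    (hr0 : 0 < r) (hr2 : r ≤ 2 * tm) (hx : x = t ∨ x = -t) :
    (s + t - sm - tm) * (r * sm) ≤ (x + tm) * (x + tm - r) * (sm + tm) := by
  have hs0 : 0 < s := by nlinarith [hs2, hβ, ht, hst, sq_nonneg t]
  have hsm0 : 0 < sm := lt_of_lt_of_le htm hsmtm
  have hssmβ : (0:ℝ) ≤ s * sm - β := by
    nlinarith [mul_pos hs0 hsm0, sq_nonneg (t * tm), mul_nonneg ht htm.le]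
  rcases hx with rfl | rfl
  · -- x = t case
    have hA2 : 0 < s + sm := by linarith
    rw [← mul_le_mul_iff_of_pos_right hA2]
    have hL : (s + x - sm - tm) * (r * sm) * (s + sm)
        = (x - tm) * (x + tm + s + sm) * (r * sm) := by
      linear_combination (r * sm) * hs2 - (r * sm) * hsm2
    rw [hL]
    rcases le_total tm x with htt | htt
    · -- x ≥ tm, hence s ≥ sm
      have hss : sm ≤ s := by nlinarith
      nlinarith [mul_nonneg (mul_nonneg (mul_nonneg (by linarith : (0:ℝ) ≤ 2*tm - r) (by linarith : (0:ℝ) ≤ x + tm)) (by linarith : (0:ℝ) ≤ sm + tm)) (by linarith : (0:ℝ) ≤ s + sm),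
        mul_nonneg (by linarith : (0:ℝ) ≤ x - tm) (mul_nonneg (mul_nonneg htm.le (by linarith : (0:ℝ) ≤ x + tm)) (by linarith : (0:ℝ) ≤ s - sm)),
        mul_nonneg (by linarith : (0:ℝ) ≤ x - tm) (mul_nonneg (mul_nonneg hsm0.le (by linarith : (0:ℝ) ≤ s + sm)) (by linarith : (0:ℝ) ≤ x - tm)),
        mul_nonneg (by linarith : (0:ℝ) ≤ x - tm) (mul_nonneg (mul_nonneg (by linarith : (0:ℝ) ≤ 2*tm - r) hsm0.le) (by linarith : (0:ℝ) ≤ x + tm + s + sm))]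
    · -- x ≤ tm, hence s ≤ sm
      have hss : s ≤ sm := by nlinarith
      set B : ℝ := (x + tm) * (sm + tm) * (s + sm) - (tm - x) * (x + tm + s + sm) * sm with hB
      have hident : (x + tm) * (x + tm - r) * (sm + tm) * (s + sm)
          - (x - tm) * (x + tm + s + sm) * (r * sm)
          = (x + tm) ^ 2 * ((sm + tm) * (s + sm)) - r * B := by rw [hB]; ring
      have hclaimC : (x + tm) ^ 2 * ((sm + tm) * (s + sm)) - 2 * tm * B
          = (tm - x) * (sm * (s + sm) * (tm - x) + tm * (sm - s) * (x + tm)) := by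
        rw [hB]; ring
      rcases le_total 0 B with hBpos | hBneg
      · nlinarith [mul_nonneg (by linarith : (0:ℝ) ≤ tm - x)
            (add_nonneg (mul_nonneg (mul_nonneg hsm0.le (by linarith : (0:ℝ) ≤ s + sm)) (by linarith : (0:ℝ) ≤ tm - x))
              (mul_nonneg (mul_nonneg htm.le (by linarith : (0:ℝ) ≤ sm - s)) (by linarith : (0:ℝ) ≤ x + tm))),
          mul_nonneg (by linarith : (0:ℝ) ≤ 2*tm - r) hBpos]
      · nlinarith [mul_nonneg hr0.le (by linarith : (0:ℝ) ≤ -B),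
          mul_nonneg (mul_nonneg (sq_nonneg (x + tm)) (by linarith : (0:ℝ) ≤ sm + tm)) (by linarith : (0:ℝ) ≤ s + sm)]
  · -- x = -t case
    have hA : 0 < (s + sm) * (sm * t + tm * s) := by
      have h1 : 0 < tm * s := mul_pos htm hs0
      have h2 : 0 ≤ sm * t := mul_nonneg hsm0.le ht
      nlinarith
    rw [← mul_le_mul_iff_of_pos_right hA]
    have e1 : (0:ℝ) ≤ t * (sm^3 - β*tm) := by
      have h : sm^3 - β*tm = sm*tm^2 + β*(sm - tm) := by linear_combination sm * hsm2
      rw [h]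
      have : (0:ℝ) ≤ sm*tm^2 + β*(sm-tm) := by
        have := mul_nonneg hβ.le (by linarith : (0:ℝ) ≤ sm - tm)
        nlinarith [mul_nonneg hsm0.le (sq_nonneg tm)]
      exact mul_nonneg ht this
    have e2 : (0:ℝ) ≤ tm * s * (sm^2 - β) := by
      have h : sm^2 - β = tm^2 := by linarith [hsm2]
      rw [h]; positivity
    have e3 : (0:ℝ) ≤ tm * tm * (s*sm - β) := mul_nonneg (mul_nonneg htm.le htm.le) hssmβ
    have e4 : (0:ℝ) ≤ tm * tm * (s^2 - β) := by
      have h : s^2 - β = t^2 := by linarith [hs2]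
      rw [h]; positivity
    have e5 : (0:ℝ) ≤ β * (s - t) * tm :=
      mul_nonneg (mul_nonneg hβ.le (by linarith)) htm.le
    have hG : 0 ≤ (sm + tm) * (s + sm) * (sm * t + tm * s) - r * β * (t + tm) := by
      nlinarith [e1, e2, e3, e4, e5,
        mul_nonneg (by linarith : (0:ℝ) ≤ 2*tm - r) (mul_nonneg hβ.le (by linarith : (0:ℝ) ≤ t + tm)),
        mul_nonneg (mul_nonneg hs0.le (sq_nonneg sm)) ht,
        mul_nonneg (mul_nonneg (sq_nonneg s) hsm0.le) htm.le,
        mul_nonneg (mul_nonneg (mul_nonneg htm.le hsm0.le) hs0.le) ht,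
        mul_nonneg (mul_nonneg htm.le hs0.le) hsm0.le]
    have hident : (-t + tm) * (-t + tm - r) * (sm + tm) * ((s + sm) * (sm * t + tm * s))
        - (s + t - sm - tm) * (r * sm) * ((s + sm) * (sm * t + tm * s))
        = (t - tm) ^ 2 * ((sm + tm) * (s + sm) * (sm * t + tm * s) - r * β * (t + tm)) := by
      linear_combination (-(tm * s * sm * r) - tm ^ 3 * r - t * sm ^ 2 * r + t * tm ^ 2 * r) * hs2
        + (tm * s * sm * r + t * sm ^ 2 * r + t ^ 2 * tm * r - t ^ 3 * r) * hsm2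
    nlinarith [mul_nonneg (sq_nonneg (t - tm)) hG]

theorem henon_lyapunov_function_estimate (a b : ℝ)
    (hb0 : 0 < |b|) (hb1 : |b| < 1) (ha : a > -(b - 1) ^ 2 / 4)
    (xm γ : ℝ)
    (hxm : xm = ((b - 1) - Real.sqrt ((b - 1) ^ 2 + 4 * a)) / 2)
    (hγ : γ = 1 / ((b - 1 - 2 * xm) * Real.sqrt (xm ^ 2 + |b|))) :
    ∀ x : ℝ,
      Real.log (Real.sqrt (x ^ 2 + |b|) + |x|) + γ * (a + (b - 1) * x - x ^ 2)
        ≤ Real.log (Real.sqrt (xm ^ 2 + |b|) + |xm|) := by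
  intro x
  have hb : b < 1 := lt_of_abs_lt hb1
  have hD : 0 < (b - 1) ^ 2 + 4 * a := by nlinarith
  set r : ℝ := Real.sqrt ((b - 1) ^ 2 + 4 * a) with hrdef
  have hr2 : r ^ 2 = (b - 1) ^ 2 + 4 * a := Real.sq_sqrt hD.le
  have hr0 : 0 < r := Real.sqrt_pos.mpr hD
  have hxm_neg : xm < 0 := by rw [hxm]; nlinarith
  have hrel : b - 1 - 2 * xm = r := by rw [hxm]; ring
  have hquad : a = xm ^ 2 - (b - 1) * xm := by
    rw [hxm]; linear_combination (-(1:ℝ)/4) * hr2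
  set β : ℝ := |b| with hβdef
  set sm : ℝ := Real.sqrt (xm ^ 2 + β) with hsmdef
  set s : ℝ := Real.sqrt (x ^ 2 + β) with hsdef
  set tm : ℝ := -xm with htmdef
  have htm0 : 0 < tm := by rw [htmdef]; linarith
  have hsm2 : sm ^ 2 = xm ^ 2 + β := Real.sq_sqrt (by positivity)
  have hsmtm : tm ≤ sm := by
    have h1 : Real.sqrt (xm ^ 2) ≤ sm := Real.sqrt_le_sqrt (by linarith)
    rwa [Real.sqrt_sq_eq_abs, abs_of_neg hxm_neg] at h1
  have hsm0 : 0 < sm := lt_of_lt_of_le htm0 hsmtm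
  have hs2 : s ^ 2 = x ^ 2 + β := Real.sq_sqrt (by positivity)
  have hst : |x| ≤ s := by
    have h1 : Real.sqrt (x ^ 2) ≤ s := Real.sqrt_le_sqrt (by linarith)
    rwa [Real.sqrt_sq_eq_abs] at h1
  have hs0 : 0 < s := Real.sqrt_pos.mpr (by positivity)
  have hxmabs : |xm| = tm := abs_of_neg hxm_neg
  have hγ' : γ = 1 / (r * sm) := by rw [hγ, hrel]
  have hrsm : 0 < r * sm := mul_pos hr0 hsm0
  have hpos1 : 0 < s + |x| := by positivity
  have hpos2 : 0 < sm + tm := by linarith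
  -- key inequality
  have hkey : (s + |x| - sm - tm) * (r * sm) ≤ (x + tm) * (x + tm - r) * (sm + tm) := by
    refine henon_key_ineq β |x| tm s sm r x hb0 (abs_nonneg x) htm0
      (by rw [hs2, sq_abs]) (by rw [hsm2, htmdef]; ring) hst hsmtm hr0 ?_ ?_
    · rw [htmdef]; linarith
    · rcases abs_choice x with h | h
      · exact Or.inl h.symm
      · exact Or.inr (by linarith)
  -- quadratic factorization
  have hquad2 : x ^ 2 - (b - 1) * x - a = (x + tm) * (x + tm - r) := by
    rw [htmdef]
    linear_combination -hquad - (x - xm) * hrel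
  -- log bound
  have hlog : Real.log (s + |x|) - Real.log (sm + tm) ≤ (s + |x|) / (sm + tm) - 1 := by
    have h := Real.log_le_sub_one_of_pos (div_pos hpos1 hpos2)
    rwa [Real.log_div hpos1.ne' hpos2.ne'] at h
  -- division step
  have hdiv : (s + |x| - (sm + tm)) / (sm + tm) ≤ (x ^ 2 - (b - 1) * x - a) / (r * sm) := by
    rw [div_le_div_iff₀ hpos2 hrsm, hquad2]
    calc (s + |x| - (sm + tm)) * (r * sm) = (s + |x| - sm - tm) * (r * sm) := by ring
      _ ≤ (x + tm) * (x + tm - r) * (sm + tm) := hkey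
  have hγeq : γ * (a + (b - 1) * x - x ^ 2) = -((x ^ 2 - (b - 1) * x - a) / (r * sm)) := by
    rw [hγ']; field_simp; ring
  have hsub : (s + |x|) / (sm + tm) - 1 = (s + |x| - (sm + tm)) / (sm + tm) := by
    field_simp
  rw [hxmabs]
  have : Real.log (s + |x|) + γ * (a + (b - 1) * x - x ^ 2) ≤ Real.log (sm + tm) := by
    rw [hγeq]
    linarith [hlog, hdiv, hsub ▸ hlog]
  exact this
end

section
/- Let a, b be real with 0 < |b| < 1, a > −(b−1)²/4, x₋ = ((b−1) − √((b−1)² + 4a))/2, γ = 1/((b − 1 − 2x₋)·√(x₋² + |b|)), and s* = 1/(1 − ln|b| / ln(√(x₋² + |b|) + |x₋|)). Then s* ∈ (0,1), and for every s ∈ (s*, 1) and every (x,y) ∈ ℝ², with V(x,y) = γ(1−s)(x + b·y) and σ₁(x) = √(x² + |b|) + |x|, σ₂(x) = |b|/σ₁(x), one has ln σ₁(x) + s·ln σ₂(x) + V(φ(x,y)) − V(x,y) < 0. -/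
open Real Set

lemma hasDerivAt_logsig (c : ℝ) (hc : 0 < c) (t : ℝ) :
    HasDerivAt (fun u : ℝ => Real.log (Real.sqrt (u ^ 2 + c) + u))
      (Real.sqrt (t ^ 2 + c))⁻¹ t := by
  have hpos : (0:ℝ) < t ^ 2 + c := by positivity
  have hsq : Real.sqrt (t ^ 2 + c) ^ 2 = t ^ 2 + c := Real.sq_sqrt hpos.le
  have hs0 : 0 < Real.sqrt (t ^ 2 + c) := Real.sqrt_pos.mpr hpos
  have hσ : 0 < Real.sqrt (t ^ 2 + c) + t := by nlinarith [sq_abs t, neg_abs_le t]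
  have h1 : HasDerivAt (fun u : ℝ => u ^ 2 + c) (2 * t) t := by
    simpa using (hasDerivAt_pow 2 t).add_const c
  have h2 : HasDerivAt (fun u : ℝ => Real.sqrt (u ^ 2 + c))
      (1 / (2 * Real.sqrt (t ^ 2 + c)) * (2 * t)) t :=
    (Real.hasDerivAt_sqrt hpos.ne').comp t h1
  have h3 : HasDerivAt (fun u : ℝ => Real.sqrt (u ^ 2 + c) + u)
      (1 / (2 * Real.sqrt (t ^ 2 + c)) * (2 * t) + 1) t := h2.add (hasDerivAt_id t)
  have h4 := h3.log hσ.ne'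
  convert h4 using 1
  field_simp
  nlinarith [hsq, hs0, hσ]

lemma logsig_tangent (c : ℝ) (hc : 0 < c) (t₀ t : ℝ) (ht₀ : 0 ≤ t₀) (ht : 0 ≤ t) :
    Real.log (Real.sqrt (t ^ 2 + c) + t) ≤
      Real.log (Real.sqrt (t₀ ^ 2 + c) + t₀) + (t - t₀) / Real.sqrt (t₀ ^ 2 + c) := by
  set k := (Real.sqrt (t₀ ^ 2 + c))⁻¹ with hk
  have hS0 : 0 < Real.sqrt (t₀ ^ 2 + c) := Real.sqrt_pos.mpr (by positivity)
  set g : ℝ → ℝ := fun u => Real.log (Real.sqrt (t₀ ^ 2 + c) + t₀) + (u - t₀) * k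
      - Real.log (Real.sqrt (u ^ 2 + c) + u) with hg
  have hder : ∀ u, HasDerivAt g (k - (Real.sqrt (u ^ 2 + c))⁻¹) u := by
    intro u
    have h1 := (((hasDerivAt_id u).sub_const t₀).mul_const k).const_add
      (Real.log (Real.sqrt (t₀ ^ 2 + c) + t₀))
    have := h1.sub (hasDerivAt_logsig c hc u)
    rw [one_mul] at this
    exact this
  have hderiv : ∀ u, deriv g u = k - (Real.sqrt (u ^ 2 + c))⁻¹ := fun u => (hder u).deriv
  have hdiff : Differentiable ℝ g := fun u => (hder u).differentiableAt
  have hg0 : g t₀ = 0 := by simp [hg]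
  have key : 0 ≤ g t := by
    rcases le_total t₀ t with h | h
    · have hmono : MonotoneOn g (Ici t₀) := by
        apply monotoneOn_of_deriv_nonneg (convex_Ici t₀) hdiff.continuous.continuousOn
          hdiff.differentiableOn
        intro u hu
        rw [interior_Ici] at hu
        rw [hderiv]
        have hle : Real.sqrt (t₀ ^ 2 + c) ≤ Real.sqrt (u ^ 2 + c) := by
          apply Real.sqrt_le_sqrt
          have : t₀ < u := hu
          nlinarith
        have := inv_anti₀ hS0 hle
        rw [hk]
        linarith
      have := hmono (mem_Ici.mpr le_rfl) (mem_Ici.mpr h) h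
      linarith [hg0]
    · have hanti : AntitoneOn g (Icc 0 t₀) := by
        apply antitoneOn_of_deriv_nonpos (convex_Icc 0 t₀) hdiff.continuous.continuousOn
          hdiff.differentiableOn
        intro u hu
        rw [interior_Icc] at hu
        rw [hderiv]
        have hle : Real.sqrt (u ^ 2 + c) ≤ Real.sqrt (t₀ ^ 2 + c) := by
          apply Real.sqrt_le_sqrt
          obtain ⟨h1, h2⟩ := hu
          nlinarith
        have hu0 : 0 < Real.sqrt (u ^ 2 + c) := Real.sqrt_pos.mpr (by positivity)
        have := inv_anti₀ hu0 hle
        rw [hk]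
        linarith
      have := hanti (mem_Icc.mpr ⟨ht, h⟩) (mem_Icc.mpr ⟨ht₀, le_rfl⟩) h
      linarith [hg0]
  have : (t - t₀) * k = (t - t₀) / Real.sqrt (t₀ ^ 2 + c) := by
    rw [hk, div_eq_mul_inv]
  simp only [hg] at key
  linarith [key]

/-- The Hénon map `φ(x,y) = (a + b y − x², x)`. -/
noncomputable def henon (a b : ℝ) (p : ℝ × ℝ) : ℝ × ℝ :=
  (a + b * p.2 - p.1 ^ 2, p.1)

theorem henon_leonov_estimate (a b : ℝ)
    (hb0 : 0 < |b|) (hb1 : |b| < 1) (ha : a > -(b - 1) ^ 2 / 4)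
    (xm γ sstar : ℝ)
    (hxm : xm = ((b - 1) - Real.sqrt ((b - 1) ^ 2 + 4 * a)) / 2)
    (hγ : γ = 1 / ((b - 1 - 2 * xm) * Real.sqrt (xm ^ 2 + |b|)))
    (hs : sstar = 1 / (1 - Real.log |b| / Real.log (Real.sqrt (xm ^ 2 + |b|) + |xm|))) :
    sstar ∈ Set.Ioo (0 : ℝ) 1 ∧
    ∀ s ∈ Set.Ioo sstar 1, ∀ x y : ℝ,
      (Real.log (Real.sqrt (x ^ 2 + |b|) + |x|)
        + s * Real.log (|b| / (Real.sqrt (x ^ 2 + |b|) + |x|))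
        + (γ * (1 - s) * ((henon a b (x, y)).1 + b * (henon a b (x, y)).2)
           - γ * (1 - s) * (x + b * y))) < 0 := by
  have hb : b < 1 := lt_of_abs_lt hb1
  have hble : b ≤ |b| := le_abs_self b
  have hD : 0 < (b - 1) ^ 2 + 4 * a := by nlinarith
  set r := Real.sqrt ((b - 1) ^ 2 + 4 * a) with hrdef
  have hr : 0 < r := Real.sqrt_pos.mpr hD
  have hr2 : r ^ 2 = (b - 1) ^ 2 + 4 * a := Real.sq_sqrt hD.le
  have hxmneg : xm < 0 := by rw [hxm]; nlinarith
  set m : ℝ := -xm with hm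
  have hm0 : 0 < m := by simp only [hm]; linarith
  have haxm : |xm| = m := abs_of_neg hxmneg
  have h2m : 2 * m = 1 - b + r := by rw [hm, hxm]; ring
  have hxm2 : xm ^ 2 = m ^ 2 := by rw [hm]; ring
  set S := Real.sqrt (m ^ 2 + |b|) with hSdef
  have hS0 : 0 < S := Real.sqrt_pos.mpr (by positivity)
  have hS2 : S ^ 2 = m ^ 2 + |b| := Real.sq_sqrt (by positivity)
  have hSx : Real.sqrt (xm ^ 2 + |b|) = S := by rw [hxm2]
  have hSm1 : 1 < S + m := by nlinarith [hS0.le, hS2]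
  set L := Real.log (S + m) with hL
  have hL0 : 0 < L := Real.log_pos hSm1
  have hlogb : Real.log |b| < 0 := Real.log_neg hb0 hb1
  have hsstar : sstar = L / (L - Real.log |b|) := by
    rw [hs, hSx, haxm, ← hL]
    field_simp
  have hden : 0 < L - Real.log |b| := by linarith
  have hsstar0 : 0 < sstar := by rw [hsstar]; positivity
  have hsstar1 : sstar < 1 := by rw [hsstar, div_lt_one hden]; linarith
  refine ⟨⟨hsstar0, hsstar1⟩, ?_⟩
  rintro s ⟨hs1, hs2⟩ x y
  have h1s : 0 < 1 - s := by linarith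
  have hbr : b - 1 - 2 * xm = r := by rw [hxm]; ring
  have hγ' : γ = 1 / (r * S) := by rw [hγ, hbr, hSx]
  have hγ0 : 0 < γ := by rw [hγ']; positivity
  set t := |x| with htdef
  have ht0 : 0 ≤ t := abs_nonneg x
  have hx2 : x ^ 2 = t ^ 2 := (sq_abs x).symm
  have hb1' : b - 1 = r - 2 * m := by linarith
  have hab : a = m * r - m ^ 2 := by
    linear_combination (-1/4) * hr2 + (-(b - 1 + r - 2 * m)/4) * h2m
  have hB : r * (t - m) ≤ x ^ 2 - (b - 1) * x - a := by
    rcases le_total 0 x with hx | hx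
    · have htx : t = x := abs_of_nonneg hx
      have hid : x ^ 2 - (b - 1) * x - a - r * (x - m)
          = (x - m) ^ 2 + 2 * x * (2 * m - r) := by
        rw [hb1', hab]; ring
      have h1 : 0 ≤ (x - m) ^ 2 := sq_nonneg _
      have h2 : 0 ≤ 2 * x * (2 * m - r) := by
        apply mul_nonneg (by linarith) (by linarith)
      rw [htx]; linarith
    · have htx : t = -x := abs_of_nonpos hx
      have hid : x ^ 2 - (b - 1) * x - a - r * (-x - m) = (x + m) ^ 2 := by
        rw [hb1', hab]; ring
      have h1 : 0 ≤ (x + m) ^ 2 := sq_nonneg _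
      rw [htx]; linarith
  have htan : Real.log (Real.sqrt (t ^ 2 + |b|) + t) ≤ L + (t - m) / S := by
    have := logsig_tangent |b| hb0 m t hm0.le ht0
    rw [← hSdef, ← hL] at this
    exact this
  have hstep : (t - m) / S ≤ γ * (x ^ 2 - (b - 1) * x - a) := by
    have h1 : (t - m) / S = γ * (r * (t - m)) := by
      rw [hγ']
      field_simp
    calc (t - m) / S = γ * (r * (t - m)) := h1
      _ ≤ γ * (x ^ 2 - (b - 1) * x - a) := mul_le_mul_of_nonneg_left hB hγ0.le
  have hmain : Real.log (Real.sqrt (x ^ 2 + |b|) + |x|)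
      ≤ L + γ * (x ^ 2 - (b - 1) * x - a) := by
    have hrw : Real.sqrt (x ^ 2 + |b|) + |x| = Real.sqrt (t ^ 2 + |b|) + t := by
      rw [hx2]
    rw [hrw]
    linarith
  have hσ0 : 0 < Real.sqrt (x ^ 2 + |b|) + |x| := by positivity
  have hlogdiv : Real.log (|b| / (Real.sqrt (x ^ 2 + |b|) + |x|))
      = Real.log |b| - Real.log (Real.sqrt (x ^ 2 + |b|) + |x|) :=
    Real.log_div (ne_of_gt hb0) (ne_of_gt hσ0)
  have hfin : (1 - s) * L + s * Real.log |b| < 0 := by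
    have heq : sstar * (L - Real.log |b|) = L := by
      rw [hsstar]
      exact div_mul_cancel₀ L hden.ne'
    have h7 : sstar * (L - Real.log |b|) < s * (L - Real.log |b|) :=
      mul_lt_mul_of_pos_right hs1 hden
    rw [heq] at h7
    linarith [h7]
  have hmul : (1 - s) * (Real.log (Real.sqrt (x ^ 2 + |b|) + |x|)
      - γ * (x ^ 2 - (b - 1) * x - a)) ≤ (1 - s) * L :=
    mul_le_mul_of_nonneg_left (by linarith) h1s.le
  have hhen1 : (henon a b (x, y)).1 = a + b * y - x ^ 2 := rfl
  have hhen2 : (henon a b (x, y)).2 = x := rfl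
  rw [hhen1, hhen2, hlogdiv]
  set σL := Real.log (Real.sqrt (x ^ 2 + |b|) + |x|) with hσL
  have hexpand : σL + s * (Real.log |b| - σL)
      + (γ * (1 - s) * (a + b * y - x ^ 2 + b * x) - γ * (1 - s) * (x + b * y))
      = (1 - s) * (σL - γ * (x ^ 2 - (b - 1) * x - a)) + s * Real.log |b| := by
    ring
  rw [hexpand]
  linarith
end
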